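/- The polynomial f(t) = t⁶ − 10t⁴ + 7t³ + 15t² − 14t + 3 is irreducible over ℚ and has six distinct real roots; hence ℚ[t]/(f) is a totally real sextic number field. -/

import Mathlib

open Polynomial

instance : Fact (Nat.Prime 7) := ⟨by norm_num⟩
instance : Fact (Nat.Prime 2) := ⟨by norm_num⟩

noncomputable def gZ : ℤ[X] := X ^ 6 - 10 * X ^ 4 + 7 * X ^ 3 + 15 * X ^ 2 - 14 * X + 3
lemma gZ_monic : gZ.Monic := by unfold gZ; monicity!
lemma gZ_deg : gZ.natDegree = 6 := by unfold gZ; compute_degree!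

noncomputable def c1 : (ZMod 7)[X] := X ^ 3 + 2 * X ^ 2 + 4 * X + 2
noncomputable def c2 : (ZMod 7)[X] := X ^ 3 + 5 * X ^ 2 + 4 * X + 5
lemma c1_monic : c1.Monic := by unfold c1; monicity!
lemma c2_monic : c2.Monic := by unfold c2; monicity!
lemma c1_deg : c1.natDegree = 3 := by unfold c1; compute_degree!
lemma c2_deg : c2.natDegree = 3 := by unfold c2; compute_degree!

lemma gZ_mod7 : gZ.map (Int.castRingHom (ZMod 7)) = c1 * c2 := by
  have key : gZ = (X ^ 3 + 2 * X ^ 2 + 4 * X + 2) * (X ^ 3 + 5 * X ^ 2 + 4 * X + 5)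
      + 7 * (- X ^ 5 - 4 * X ^ 4 - 4 * X ^ 3 - 3 * X ^ 2 - 6 * X - 1) := by
    unfold gZ; ring
  have h7 : (7 : (ZMod 7)[X]) = 0 := by
    rw [← map_ofNat (C : ZMod 7 →+* (ZMod 7)[X]) 7, show (7 : ZMod 7) = 0 by decide, map_zero]
  rw [key]
  simp only [Polynomial.map_add, Polynomial.map_mul, Polynomial.map_sub, Polynomial.map_neg,
    Polynomial.map_pow, Polynomial.map_X, Polynomial.map_ofNat, Polynomial.map_one, h7,
    zero_mul, add_zero]
  rfl

lemma c1_irr : Irreducible c1 := by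
  rw [c1_monic.irreducible_iff_roots_eq_zero_of_degree_le_three (by rw [c1_deg]; norm_num)
    (by rw [c1_deg])]
  rw [Multiset.eq_zero_iff_forall_notMem]
  intro x hx
  rw [mem_roots c1_monic.ne_zero, IsRoot, c1] at hx
  simp only [eval_add, eval_mul, eval_pow, eval_X, eval_ofNat] at hx
  revert hx
  revert x; decide

lemma c2_irr : Irreducible c2 := by
  rw [c2_monic.irreducible_iff_roots_eq_zero_of_degree_le_three (by rw [c2_deg]; norm_num)
    (by rw [c2_deg])]
  rw [Multiset.eq_zero_iff_forall_notMem]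
  intro x hx
  rw [mem_roots c2_monic.ne_zero, IsRoot, c2] at hx
  simp only [eval_add, eval_mul, eval_pow, eval_X, eval_ofNat] at hx
  revert hx
  revert x; decide

noncomputable def q5 : (ZMod 2)[X] := X ^ 5 + X ^ 4 + X ^ 3 + X + 1
lemma q5_monic : q5.Monic := by unfold q5; monicity!
lemma q5_deg : q5.natDegree = 5 := by unfold q5; compute_degree!
lemma hX1deg2 : (X + 1 : (ZMod 2)[X]).natDegree = 1 := by compute_degree!

lemma gZ_mod2 : gZ.map (Int.castRingHom (ZMod 2)) = (X + 1) * q5 := by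
  have h2 : (2 : (ZMod 2)[X]) = 0 := by
    rw [← map_ofNat (C : ZMod 2 →+* (ZMod 2)[X]) 2, show (2 : ZMod 2) = 0 by decide, map_zero]
  have key : gZ = (X + 1) * (X ^ 5 + X ^ 4 + X ^ 3 + X + 1)
      + 2 * (- X ^ 5 - 6 * X ^ 4 + 3 * X ^ 3 + 7 * X ^ 2 - 8 * X + 1) := by
    unfold gZ; ring
  rw [key]
  simp only [Polynomial.map_add, Polynomial.map_mul, Polynomial.map_sub, Polynomial.map_neg,
    Polynomial.map_pow, Polynomial.map_X, Polynomial.map_ofNat, Polynomial.map_one, h2,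
    zero_mul, add_zero]
  rfl
lemma deg_factor {K : Type*} [Field K] {u v A B : K[X]} (hu : Irreducible u) (hv : Irreducible v)
    (hA : A.Monic) (hB : B.Monic) (h : A * B = u * v)
    (hA0 : A.natDegree ≠ 0) (hB0 : B.natDegree ≠ 0) :
    A.natDegree = u.natDegree ∨ A.natDegree = v.natDegree := by
  have hudvd : u ∣ A * B := h ▸ Dvd.intro _ rfl
  have hBnu : ¬ IsUnit B := fun hBu => hB0 (natDegree_eq_zero_of_isUnit hBu)
  have hAnu : ¬ IsUnit A := fun hAu => hA0 (natDegree_eq_zero_of_isUnit hAu)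
  rcases hu.prime.2.2 A B hudvd with hA' | hB'
  · obtain ⟨d, rfl⟩ := hA'
    left
    have hcan : d * B = v := by
      have := h
      rw [mul_assoc] at this
      exact mul_left_cancel₀ hu.ne_zero this
    rcases hv.isUnit_or_isUnit hcan.symm with hd | hBu
    · have hd0 : d.natDegree = 0 := natDegree_eq_zero_of_isUnit hd
      rw [natDegree_mul hu.ne_zero (fun h0 => by simp [h0] at hd), hd0, add_zero]
    · exact absurd hBu hBnu
  · obtain ⟨d, rfl⟩ := hB'
    right
    have hcan : A * d = v := by
      have := h
      rw [show A * (u * d) = u * (A * d) by ring] at this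
      exact mul_left_cancel₀ hu.ne_zero this
    rcases hv.isUnit_or_isUnit hcan.symm with hAu | hd
    · exact absurd hAu hAnu
    · have hd0 : d.natDegree = 0 := natDegree_eq_zero_of_isUnit hd
      rw [← hcan, natDegree_mul hA.ne_zero (fun h0 => by simp [h0] at hd),
        hd0, add_zero]
lemma quad_rep {R : Type*} [Semiring R] {q : R[X]} (hq : q.Monic) (h : q.natDegree = 2) :
    q = X ^ 2 + C (q.coeff 1) * X + C (q.coeff 0) := by
  ext n
  have h2 : q.coeff 2 = 1 := by
    have := hq.leadingCoeff
    rwa [leadingCoeff, h] at this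
  match n with
  | 0 => simp
  | 1 => simp [coeff_X_pow]
  | 2 => simp [coeff_X_pow, h2]
  | (n+3) =>
    rw [coeff_eq_zero_of_natDegree_lt (by omega : q.natDegree < n + 3)]
    simp [coeff_X_pow, coeff_C]


lemma h2zero : (2 : (ZMod 2)[X]) = 0 := by
  rw [← map_ofNat (C : ZMod 2 →+* (ZMod 2)[X]) 2, show (2 : ZMod 2) = 0 by decide, map_zero]

lemma not_dvd_of_rem {d r c : (ZMod 2)[X]} (h : q5 = d * c + r) (hr : r ≠ 0)
    (hlt : r.natDegree < d.natDegree) (hdvd : d ∣ q5) : False := by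
  have hdr : d ∣ r := by
    have : r = q5 - d * c := by rw [h]; ring
    rw [this]
    exact dvd_sub hdvd (Dvd.intro c rfl)
  exact absurd (natDegree_le_of_dvd hdr hr) (by omega)


lemma q5_irr : Irreducible q5 := by
  rw [q5_monic.irreducible_iff_lt_natDegree_lt
    (fun h => by have := q5_deg; rw [h] at this; simp at this)]
  intro q hq hmem hdvd
  rw [Finset.mem_Ioc, q5_deg] at hmem
  obtain ⟨hm1, hm2⟩ := hmem
  have hcases : ∀ x : ZMod 2, x = 0 ∨ x = 1 := by decide
  have hX1ne : (X + 1 : (ZMod 2)[X]) ≠ 0 := fun h => by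
    simpa using congrArg (fun p => Polynomial.eval 0 p) h
  have hX1deg : (X + 1 : (ZMod 2)[X]).natDegree = 1 := by compute_degree!
  norm_num at hm2
  have dq1 : (X ^ 2 + 1 : (ZMod 2)[X]).natDegree = 2 := by compute_degree!
  have dq2 : (X ^ 2 + X : (ZMod 2)[X]).natDegree = 2 := by compute_degree!
  have dq3 : (X ^ 2 + X + 1 : (ZMod 2)[X]).natDegree = 2 := by compute_degree!
  interval_cases hdeg : q.natDegree
  · -- degree 1
    rw [hq.eq_X_add_C hdeg] at hdvd
    obtain h0 | h0 := hcases (q.coeff 0) <;> rw [h0] at hdvd <;>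
      simp only [C_0, C_1, add_zero] at hdvd
    · exact not_dvd_of_rem (d := X) (c := X ^ 4 + X ^ 3 + X ^ 2 + 1) (r := 1)
        (by unfold q5; ring) one_ne_zero (by simp) hdvd
    · exact not_dvd_of_rem (d := X + 1) (c := X ^ 4 + X ^ 2 + X) (r := 1)
        (by unfold q5; linear_combination (-X^2 : (ZMod 2)[X]) * h2zero) one_ne_zero
        (by simp [hX1deg]) hdvd
  · -- degree 2
    rw [quad_rep hq hdeg] at hdvd
    obtain h1 | h1 := hcases (q.coeff 1) <;> obtain h0 | h0 := hcases (q.coeff 0) <;>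
      rw [h0, h1] at hdvd <;>
      simp only [C_0, C_1, zero_mul, one_mul, add_zero, zero_add] at hdvd
    · exact not_dvd_of_rem (d := X ^ 2) (c := X ^ 3 + X ^ 2 + X) (r := X + 1)
        (by unfold q5; ring) hX1ne (by simp [hX1deg]) hdvd
    · exact not_dvd_of_rem (d := X ^ 2 + 1) (c := X ^ 3 + X ^ 2 + 1) (r := X)
        (by unfold q5; linear_combination (-X^2 : (ZMod 2)[X]) * h2zero) X_ne_zero
        (by simp [dq1]) hdvd
    · exact not_dvd_of_rem (d := X ^ 2 + X) (c := X ^ 3 + X + 1) (r := 1)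
        (by unfold q5; linear_combination (-X^2 : (ZMod 2)[X]) * h2zero) one_ne_zero
        (by simp [dq2]) hdvd
    · exact not_dvd_of_rem (d := X ^ 2 + X + 1) (c := X ^ 3) (r := X + 1)
        (by unfold q5; ring) hX1ne (by rw [hX1deg, dq3]; omega) hdvd

lemma gZ_irr : Irreducible gZ := by
  rw [gZ_monic.irreducible_iff_natDegree]
  refine ⟨fun h1 => by have := gZ_deg; rw [h1] at this; simp at this, ?_⟩
  intro a b ha hb hab
  by_contra hcon
  push_neg at hcon
  obtain ⟨ha0, hb0⟩ := hcon
  have hsum : a.natDegree + b.natDegree = 6 := by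
    rw [← ha.natDegree_mul hb, hab, gZ_deg]
  have h7 : a.natDegree = 3 := by
    have hmap : (a.map (Int.castRingHom (ZMod 7))) * (b.map (Int.castRingHom (ZMod 7)))
        = c1 * c2 := by rw [← Polynomial.map_mul, hab, gZ_mod7]
    have := deg_factor c1_irr c2_irr (ha.map _) (hb.map _) hmap
      (by rw [ha.natDegree_map]; exact ha0) (by rw [hb.natDegree_map]; exact hb0)
    rw [ha.natDegree_map, c1_deg, c2_deg] at this
    exact this.elim id id
  have h2 : a.natDegree = 1 ∨ a.natDegree = 5 := by
    have hmap : (a.map (Int.castRingHom (ZMod 2))) * (b.map (Int.castRingHom (ZMod 2)))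
        = (X + 1) * q5 := by rw [← Polynomial.map_mul, hab, gZ_mod2]
    have hlin : Irreducible (X + 1 : (ZMod 2)[X]) := by
      simpa using irreducible_of_degree_eq_one (degree_X_add_C (1 : ZMod 2))
    have := deg_factor hlin q5_irr (ha.map _) (hb.map _) hmap
      (by rw [ha.natDegree_map]; exact ha0) (by rw [hb.natDegree_map]; exact hb0)
    rw [ha.natDegree_map, q5_deg, hX1deg2] at this
    exact this
  omega


lemma fQ_eq : (X ^ 6 - 10 * X ^ 4 + 7 * X ^ 3 + 15 * X ^ 2 - 14 * X + 3 : ℚ[X])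
    = gZ.map (algebraMap ℤ ℚ) := by
  unfold gZ
  simp only [Polynomial.map_add, Polynomial.map_sub, Polynomial.map_mul, Polynomial.map_pow,
    Polynomial.map_X, Polynomial.map_ofNat]

lemma fQ_irr : Irreducible (X ^ 6 - 10 * X ^ 4 + 7 * X ^ 3 + 15 * X ^ 2 - 14 * X + 3 : ℚ[X]) := by
  rw [fQ_eq]
  exact (gZ_monic.irreducible_iff_irreducible_map_fraction_map).mp gZ_irr


noncomputable def FR : ℝ[X] := X ^ 6 - 10 * X ^ 4 + 7 * X ^ 3 + 15 * X ^ 2 - 14 * X + 3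
lemma FR_deg : FR.natDegree = 6 := by unfold FR; compute_degree!
lemma FR_ne : FR ≠ 0 := fun h => by have := FR_deg; rw [h] at this; simp at this

lemma FR_eval (x : ℝ) : FR.eval x = x ^ 6 - 10 * x ^ 4 + 7 * x ^ 3 + 15 * x ^ 2 - 14 * x + 3 := by
  unfold FR
  simp [eval_add, eval_sub, eval_mul, eval_pow]

lemma root_between_inc (a b : ℝ) (hab : a ≤ b) (h1 : FR.eval a < 0) (h2 : 0 < FR.eval b) :
    ∃ x ∈ Set.Ioo a b, FR.IsRoot x := by
  have := intermediate_value_Ioo hab (FR.continuousOn (s := Set.Icc a b))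
  obtain ⟨x, hx, hx0⟩ := this (Set.mem_Ioo.mpr ⟨h1, h2⟩)
  exact ⟨x, hx, hx0⟩

lemma root_between_dec (a b : ℝ) (hab : a ≤ b) (h1 : 0 < FR.eval a) (h2 : FR.eval b < 0) :
    ∃ x ∈ Set.Ioo a b, FR.IsRoot x := by
  have := intermediate_value_Ioo' hab (FR.continuousOn (s := Set.Icc a b))
  obtain ⟨x, hx, hx0⟩ := this (Set.mem_Ioo.mpr ⟨h2, h1⟩)
  exact ⟨x, hx, hx0⟩

lemma FR_roots_card : FR.roots.toFinset.card = 6 := by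
  obtain ⟨r1, hr1, hr1root⟩ := root_between_dec (-4) (-3) (by norm_num)
    (by rw [FR_eval]; norm_num) (by rw [FR_eval]; norm_num)
  obtain ⟨r2, hr2, hr2root⟩ := root_between_inc (-3) 0 (by norm_num)
    (by rw [FR_eval]; norm_num) (by rw [FR_eval]; norm_num)
  obtain ⟨r3, hr3, hr3root⟩ := root_between_dec 0 (2/5) (by norm_num)
    (by rw [FR_eval]; norm_num) (by rw [FR_eval]; norm_num)
  obtain ⟨r4, hr4, hr4root⟩ := root_between_inc (2/5) (1/2) (by norm_num)
    (by rw [FR_eval]; norm_num) (by rw [FR_eval]; norm_num)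
  obtain ⟨r5, hr5, hr5root⟩ := root_between_dec (1/2) (8/5) (by norm_num)
    (by rw [FR_eval]; norm_num) (by rw [FR_eval]; norm_num)
  obtain ⟨r6, hr6, hr6root⟩ := root_between_inc (8/5) (5/2) (by norm_num)
    (by rw [FR_eval]; norm_num) (by rw [FR_eval]; norm_num)
  obtain ⟨h1a, h1b⟩ := hr1
  obtain ⟨h2a, h2b⟩ := hr2
  obtain ⟨h3a, h3b⟩ := hr3
  obtain ⟨h4a, h4b⟩ := hr4
  obtain ⟨h5a, h5b⟩ := hr5
  obtain ⟨h6a, h6b⟩ := hr6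
  have hs : ({r1, r2, r3, r4, r5, r6} : Finset ℝ) ⊆ FR.roots.toFinset := by
    intro x hx
    rw [Multiset.mem_toFinset, mem_roots FR_ne]
    simp only [Finset.mem_insert, Finset.mem_singleton] at hx
    rcases hx with rfl|rfl|rfl|rfl|rfl|rfl <;> assumption
  have hcard : ({r1, r2, r3, r4, r5, r6} : Finset ℝ).card = 6 := by
    have : r1 < r2 ∧ r2 < r3 ∧ r3 < r4 ∧ r4 < r5 ∧ r5 < r6 := by
      refine ⟨by linarith, by linarith, by linarith, by linarith, by linarith⟩
    obtain ⟨l1, l2, l3, l4, l5⟩ := this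
    rw [Finset.card_insert_of_notMem (by
        simp only [Finset.mem_insert, Finset.mem_singleton]; push_neg
        exact ⟨fun h => by linarith, fun h => by linarith, fun h => by linarith,
          fun h => by linarith, fun h => by linarith⟩),
      Finset.card_insert_of_notMem (by
        simp only [Finset.mem_insert, Finset.mem_singleton]; push_neg
        exact ⟨fun h => by linarith, fun h => by linarith, fun h => by linarith,
          fun h => by linarith⟩),
      Finset.card_insert_of_notMem (by
        simp only [Finset.mem_insert, Finset.mem_singleton]; push_neg
        exact ⟨fun h => by linarith, fun h => by linarith, fun h => by linarith⟩),
      Finset.card_insert_of_notMem (by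
        simp only [Finset.mem_insert, Finset.mem_singleton]; push_neg
        exact ⟨fun h => by linarith, fun h => by linarith⟩),
      Finset.card_insert_of_notMem (by
        simp only [Finset.mem_singleton]
        exact fun h => by linarith),
      Finset.card_singleton]
  refine le_antisymm ?_ ?_
  · calc FR.roots.toFinset.card ≤ Multiset.card FR.roots := Multiset.toFinset_card_le _
    _ ≤ FR.natDegree := FR.card_roots'
    _ = 6 := FR_deg
  · calc (6:ℕ) = ({r1, r2, r3, r4, r5, r6} : Finset ℝ).card := hcard.symm
    _ ≤ FR.roots.toFinset.card := Finset.card_le_card hs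


noncomputable def fQ : ℚ[X] := X ^ 6 - 10 * X ^ 4 + 7 * X ^ 3 + 15 * X ^ 2 - 14 * X + 3

lemma map_f_eq_FR : fQ.map (algebraMap ℚ ℝ) = FR := by
  unfold fQ FR
  simp only [Polynomial.map_add, Polynomial.map_sub, Polynomial.map_mul, Polynomial.map_pow,
    Polynomial.map_X, Polynomial.map_ofNat]

lemma FR_splits : FR.Splits := by
  rw [splits_iff_card_roots]
  have h1 : (6:ℕ) ≤ Multiset.card FR.roots := by
    calc (6:ℕ) = FR.roots.toFinset.card := FR_roots_card.symm
    _ ≤ Multiset.card FR.roots := Multiset.toFinset_card_le _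
  have h2 : Multiset.card FR.roots ≤ FR.natDegree := FR.card_roots'
  rw [FR_deg]
  rw [FR_deg] at h2
  omega

lemma all_roots_real (z : ℂ) (hz : Polynomial.aeval z fQ = 0) : z.im = 0 := by
  have h1 : fQ.map (algebraMap ℚ ℂ) = FR.map (algebraMap ℝ ℂ) := by
    rw [← map_f_eq_FR, Polynomial.map_map]
    congr 1
  rw [aeval_def, eval₂_eq_eval_map, h1] at hz
  have hne : FR.map (algebraMap ℝ ℂ) ≠ 0 := by
    refine Polynomial.map_ne_zero FR_ne
  have hmem : z ∈ (FR.map (algebraMap ℝ ℂ)).roots := by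
    rw [mem_roots hne]
    exact hz
  rw [FR_splits.roots_map] at hmem
  obtain ⟨r, _, hrz⟩ := Multiset.mem_map.mp hmem
  rw [← hrz]
  simp [Complex.ofReal_im]

/-- The polynomial `f(t) = t⁶ − 10t⁴ + 7t³ + 15t² − 14t + 3` is irreducible over ℚ
and has six distinct real roots; hence every complex root of `f` is real, so that
`ℚ[t]/(f)` is a totally real sextic number field. -/
theorem stmt_17 :
    let f : ℚ[X] := X ^ 6 - 10 * X ^ 4 + 7 * X ^ 3 + 15 * X ^ 2 - 14 * X + 3
    Irreducible f ∧
    ((f.map (algebraMap ℚ ℝ)).roots.toFinset.card = 6) ∧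
    (∀ z : ℂ, Polynomial.aeval z f = 0 → z.im = 0) := by
  intro f
  refine ⟨fQ_irr, ?_, ?_⟩
  · rw [show f.map (algebraMap ℚ ℝ) = FR from map_f_eq_FR]
    exact FR_roots_card
  · exact all_roots_real
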